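/- Let M ∈ (0,∞), p,q ∈ (0,∞] with q < ∞, α < 0, and let w(t) = t^{q/p − 1} (log(2M/t))^{αq} for t ∈ (0,M) (with q/p interpreted as 0 when p = ∞). Then for every λ ∈ (0,1), Θ(λ) = sup_{t ∈ (0, λM)} w(t/λ)/(λ w(t)) = λ^{−q/p} (log 2)^{αq} (log(2/λ))^{−αq}. Consequently lim_{λ→1⁻} Θ(λ) = 1, and in particular inf_{λ ∈ (0,1)} Θ(λ) ≤ 1. -/

import Mathlib

open scoped ENNReal

open Real Set Filter

/-- Pointwise simplification of the quotient `w(t/l)/(l w(t))`. -/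
lemma LZ_ratio_eq (M a β l t : ℝ) (hM : 0 < M) (hl0 : 0 < l) (hl1 : l < 1)
    (ht : t ∈ Set.Ioo 0 (l * M)) :
    (t / l) ^ (a - 1) * Real.log (2 * M / (t / l)) ^ β /
        (l * (t ^ (a - 1) * Real.log (2 * M / t) ^ β))
      = l ^ (-a) * (Real.log (2 * M * l / t) / Real.log (2 * M / t)) ^ β := by
  obtain ⟨ht0, htl⟩ := ht
  have harg : 2 * M / (t / l) = 2 * M * l / t := by
    field_simp
  have hL1 : 0 < Real.log (2 * M * l / t) := by
    apply Real.log_pos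
    rw [lt_div_iff₀ ht0]
    nlinarith
  have hL2 : 0 < Real.log (2 * M / t) := by
    apply Real.log_pos
    rw [lt_div_iff₀ ht0]
    nlinarith
  rw [harg, Real.div_rpow ht0.le hl0.le, Real.div_rpow hL1.le hL2.le,
    Real.rpow_neg hl0.le]
  have hla : l ^ a = l ^ (a - 1) * l := by
    rw [show a = a - 1 + 1 by ring, Real.rpow_add hl0, Real.rpow_one]
    ring_nf
  rw [hla]
  have h1 : (0:ℝ) < t ^ (a - 1) := Real.rpow_pos_of_pos ht0 _
  have h2 : (0:ℝ) < l ^ (a - 1) := Real.rpow_pos_of_pos hl0 _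
  have h3 : (0:ℝ) < Real.log (2 * M / t) ^ β := Real.rpow_pos_of_pos hL2 _
  field_simp

lemma LZ_isLUB (M a β : ℝ) (hM : 0 < M) (hβ : β < 0) (l : ℝ) (hl0 : 0 < l) (hl1 : l < 1) :
    IsLUB ((fun t => (t / l) ^ (a - 1) * Real.log (2 * M / (t / l)) ^ β /
        (l * (t ^ (a - 1) * Real.log (2 * M / t) ^ β))) '' Set.Ioo 0 (l * M))
      (l ^ (-a) * Real.log 2 ^ β * Real.log (2 / l) ^ (-β)) := by
  have hlog2 : (0:ℝ) < Real.log 2 := Real.log_pos one_lt_two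
  have hlogl : Real.log l < 0 := Real.log_neg hl0 hl1
  have hlog2l : Real.log (2 / l) = Real.log 2 - Real.log l :=
    Real.log_div two_ne_zero hl0.ne'
  have hlog2l_pos : (0:ℝ) < Real.log (2 / l) := by rw [hlog2l]; linarith
  set V : ℝ := l ^ (-a) * Real.log 2 ^ β * Real.log (2 / l) ^ (-β) with hV
  have hVeq : V = l ^ (-a) * (Real.log 2 / Real.log (2 / l)) ^ β := by
    rw [hV, Real.div_rpow hlog2.le hlog2l_pos.le, Real.rpow_neg hlog2l_pos.le]
    ring
  have hg_le : ∀ t ∈ Set.Ioo 0 (l * M),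
      l ^ (-a) * (Real.log (2 * M * l / t) / Real.log (2 * M / t)) ^ β ≤ V := by
    intro t ht
    obtain ⟨ht0, htl⟩ := ht
    have hL1 : 0 < Real.log (2 * M * l / t) := by
      apply Real.log_pos; rw [lt_div_iff₀ ht0]; nlinarith
    have hL2 : 0 < Real.log (2 * M / t) := by
      apply Real.log_pos; rw [lt_div_iff₀ ht0]; nlinarith
    have hL12 : Real.log (2 * M * l / t) = Real.log (2 * M / t) + Real.log l := by
      rw [show 2 * M * l / t = 2 * M / t * l by ring, Real.log_mul (by positivity) hl0.ne']
    have hL1ge : Real.log 2 ≤ Real.log (2 * M * l / t) := by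
      apply Real.log_le_log two_pos
      rw [le_div_iff₀ ht0]; nlinarith
    rw [hVeq]
    apply mul_le_mul_of_nonneg_left _ (Real.rpow_pos_of_pos hl0 _).le
    apply Real.rpow_le_rpow_of_nonpos (by positivity) _ hβ.le
    rw [div_le_div_iff₀ hlog2l_pos (by positivity)]
    nlinarith
  have hcont : Filter.Tendsto
      (fun t => l ^ (-a) * (Real.log (2 * M * l / t) / Real.log (2 * M / t)) ^ β)
      (nhdsWithin (l * M) (Set.Ioo 0 (l * M))) (nhds V) := by
    have h1 : 2 * M * l / (l * M) = 2 := by field_simp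
    have h2 : 2 * M / (l * M) = 2 / l := by field_simp
    have : ContinuousAt
        (fun t => l ^ (-a) * (Real.log (2 * M * l / t) / Real.log (2 * M / t)) ^ β)
        (l * M) := by
      apply ContinuousAt.mul continuousAt_const
      apply ContinuousAt.rpow_const
      · apply ContinuousAt.div
        · exact (Real.continuousAt_log (by rw [h1]; norm_num)).comp
            (continuousAt_const.div continuousAt_id (by positivity))
        · exact (Real.continuousAt_log (by rw [h2]; positivity)).comp
            (continuousAt_const.div continuousAt_id (by positivity))
        · rw [h2]; exact hlog2l_pos.ne'
      · left; rw [h1, h2]; positivity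
    have := this.continuousWithinAt (s := Set.Ioo 0 (l * M))
    rw [ContinuousWithinAt] at this
    convert this using 2
    rw [hVeq, h1, h2]
  constructor
  · rintro x ⟨t, ht, rfl⟩
    simp only
    rw [LZ_ratio_eq M a β l t hM hl0 hl1 ht]
    exact hg_le t ht
  · intro b hb
    have : NeBot (nhdsWithin (l * M) (Set.Ioo 0 (l * M))) :=
      right_nhdsWithin_Ioo_neBot (by positivity)
    refine le_of_tendsto hcont ?_
    apply eventually_nhdsWithin_of_forall
    intro t ht
    rw [← LZ_ratio_eq M a β l t hM hl0 hl1 ht]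
    exact hb ⟨t, ht, rfl⟩


/-- For the (q-th power of the) Lorentz–Zygmund weight
`w(t) = t^{q/p - 1} (log(2M/t))^{αq}` with `α < 0` (and `q/p = 0` when `p = ∞`),
the dilation function satisfies
`Θ(λ) = λ^{-q/p} (log 2)^{αq} (log(2/λ))^{-αq}`, `Θ(λ) → 1` as `λ → 1⁻`, and
`inf_{λ∈(0,1)} Θ(λ) ≤ 1`. -/
theorem dilation_function_LZ_weight_alpha_neg (M : ℝ) (hM : 0 < M)
    (q : ℝ) (hq : 0 < q) (p : ℝ≥0∞) (hp : 0 < p) (α : ℝ) (hα : α < 0)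
    (w : ℝ → ℝ)
    (hw : ∀ t, w t = t ^ (q / p.toReal - 1) * Real.log (2 * M / t) ^ (α * q))
    (Θ : ℝ → ℝ)
    (hΘ : ∀ l, Θ l = sSup ((fun t => w (t / l) / (l * w t)) '' Set.Ioo 0 (l * M))) :
    (∀ l ∈ Set.Ioo (0 : ℝ) 1,
        Θ l = l ^ (-(q / p.toReal)) * Real.log 2 ^ (α * q) * Real.log (2 / l) ^ (-(α * q))) ∧
    Filter.Tendsto Θ (nhdsWithin 1 (Set.Iio 1)) (nhds 1) ∧
    sInf (Θ '' Set.Ioo 0 1) ≤ 1 := by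
  set a : ℝ := q / p.toReal with ha
  set β : ℝ := α * q with hβdef
  have hβ : β < 0 := mul_neg_of_neg_of_pos hα hq
  have hlog2 : (0:ℝ) < Real.log 2 := Real.log_pos one_lt_two
  set V : ℝ → ℝ := fun l => l ^ (-a) * Real.log 2 ^ β * Real.log (2 / l) ^ (-β) with hVdef
  have key : ∀ l ∈ Set.Ioo (0:ℝ) 1, Θ l = V l := by
    intro l hl
    obtain ⟨hl0, hl1⟩ := hl
    have hfun : (fun t => w (t / l) / (l * w t)) =
        (fun t => (t / l) ^ (a - 1) * Real.log (2 * M / (t / l)) ^ β /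
          (l * (t ^ (a - 1) * Real.log (2 * M / t) ^ β))) := by
      funext t; rw [hw, hw]
    rw [hΘ l, hfun,
      (LZ_isLUB M a β hM hβ l hl0 hl1).csSup_eq
        ((Set.nonempty_Ioo.2 (by positivity)).image _)]
  have hVcont : Filter.Tendsto V (nhdsWithin 1 (Set.Iio 1)) (nhds 1) := by
    have hc : ContinuousAt V 1 := by
      apply ContinuousAt.mul
      apply ContinuousAt.mul
      · exact ContinuousAt.rpow_const continuousAt_id (Or.inl one_ne_zero)
      · exact continuousAt_const
      · apply ContinuousAt.rpow_const
        · exact (Real.continuousAt_log (by norm_num)).comp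
            (continuousAt_const.div continuousAt_id one_ne_zero)
        · left; norm_num
    have hV1 : V 1 = 1 := by
      have : (2:ℝ) / 1 = 2 := by norm_num
      rw [hVdef]
      simp only [this, Real.one_rpow, one_mul]
      rw [← Real.rpow_add hlog2, add_neg_cancel, Real.rpow_zero]
    have h := hc.continuousWithinAt (s := Set.Iio 1)
    rw [ContinuousWithinAt, hV1] at h
    exact h
  have hΘev : Θ =ᶠ[nhdsWithin 1 (Set.Iio 1)] V := by
    filter_upwards [Ioo_mem_nhdsLT_of_mem (Set.right_mem_Ioc.2 one_pos)] with l hl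
    exact key l hl
  have hΘtend : Filter.Tendsto Θ (nhdsWithin 1 (Set.Iio 1)) (nhds 1) :=
    hVcont.congr' hΘev.symm
  refine ⟨key, hΘtend, ?_⟩
  have hbdd : BddBelow (Θ '' Set.Ioo 0 1) := by
    refine ⟨0, ?_⟩
    rintro x ⟨l, hl, rfl⟩
    rw [key l hl]
    have h2l : (0:ℝ) < Real.log (2 / l) :=
      Real.log_pos (by rw [lt_div_iff₀ hl.1]; linarith [hl.2])
    have := Real.rpow_pos_of_pos hl.1 (-a)
    positivity
  have : (nhdsWithin (1:ℝ) (Set.Iio 1)).NeBot := nhdsLT_neBot 1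
  refine ge_of_tendsto hΘtend ?_
  filter_upwards [Ioo_mem_nhdsLT_of_mem (Set.right_mem_Ioc.2 one_pos)] with l hl
  exact csInf_le hbdd ⟨l, hl, rfl⟩
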